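/- arXiv:1902.03502 — 2 statements merged into one kernel-verified Lean document; each statement's English description precedes it below -/
import Mathlib

section
/- Let A ∈ ℝ^{m×n} with rows a_i of unit norm, b ∈ ℝ^m, and let (A^T A)^† denote the Moore–Penrose pseudoinverse of A^T A. For y ∈ ℝ^n, consider the sampling scheme that picks β rows uniformly at random and selects the row i* maximizing the positive residual (a_i^T y − b_i)^+ over the sample; equivalently, the expectation over this scheme of a quantity depending on the selected index equals (1/C(m,β)) Σ_{k=0}^{m−β} C(β−1+k, β−1) times the quantity evaluated at the index of the (β+k)-th smallest entry of (Ay − b)^+. Then E[‖a_{i*} (a_{i*}^T y − b_{i*})^+‖²_{(A^T A)^†}] ≤ (β/m) ‖(Ay − b)^+‖². -/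
noncomputable section
open Matrix Finset

/-- Positive residual `(aᵢᵀy − bᵢ)⁺` of row `i` of the system `Ax ≤ b` at `y`. -/
def res {m n : ℕ} (A : Matrix (Fin m) (Fin n) ℝ) (b : Fin m → ℝ) (y : Fin n → ℝ)
    (i : Fin m) : ℝ :=
  max (A.mulVec y i - b i) 0

/-- For `A` with unit-norm rows and `B` the Moore–Penrose pseudoinverse
of `AᵀA` (characterized by the four Penrose conditions), under the sampling scheme that
picks `β` rows uniformly at random and selects the row maximizing the positive residual
(so that the expectation of a quantity `q` of the selected index equals
`(1/C(m,β)) Σ_{k=0}^{m−β} C(β−1+k, β−1) q(i_k)` where `i_k` is the index of the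
`(β+k)`-th smallest entry of `(Ay − b)⁺`, encoded by a sorting bijection `ord`), one has
`E[‖a_{i*}(a_{i*}ᵀy − b_{i*})⁺‖²_{(AᵀA)†}] ≤ (β/m)‖(Ay − b)⁺‖²`. -/
theorem stmt0 {m n β : ℕ} (hβ : 1 ≤ β) (hβm : β ≤ m)
    (A : Matrix (Fin m) (Fin n) ℝ) (b : Fin m → ℝ) (y : Fin n → ℝ)
    (hrows : ∀ i, ∑ j, A i j ^ 2 = 1)
    (B : Matrix (Fin n) (Fin n) ℝ)
    (hB1 : Aᵀ * A * B * (Aᵀ * A) = Aᵀ * A)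
    (hB2 : B * (Aᵀ * A) * B = B)
    (hB3 : (Aᵀ * A * B)ᵀ = Aᵀ * A * B)
    (hB4 : (B * (Aᵀ * A))ᵀ = B * (Aᵀ * A))
    (ord : Fin m ≃ Fin m)
    (hord : ∀ j j' : Fin m, j ≤ j' → res A b y (ord j) ≤ res A b y (ord j')) :
    (1 / (m.choose β : ℝ)) *
      ∑ k : Fin (m - β + 1), ((β - 1 + k.val).choose (β - 1) : ℝ) *
        ((res A b y (ord ⟨β - 1 + k.val, by have := k.isLt; omega⟩) •
            A (ord ⟨β - 1 + k.val, by have := k.isLt; omega⟩)) ⬝ᵥ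
          B.mulVec
            (res A b y (ord ⟨β - 1 + k.val, by have := k.isLt; omega⟩) •
              A (ord ⟨β - 1 + k.val, by have := k.isLt; omega⟩)))
    ≤ ((β : ℝ) / (m : ℝ)) * ∑ i, res A b y i ^ 2 := by
  have hm : 1 ≤ m := le_trans hβ hβm
  set M : Matrix (Fin n) (Fin n) ℝ := Aᵀ * A with hM
  have hMsymm : Mᵀ = M := by rw [hM, Matrix.transpose_mul, Matrix.transpose_transpose]
  -- Step 1: A * B * M = A
  have e0 : Aᵀ * (A * B * M) = M := by
    rw [← Matrix.mul_assoc Aᵀ (A * B) M, ← Matrix.mul_assoc Aᵀ A B, ← hM]; exact hB1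
  have hABM : A * B * M = A := by
    have hX : (A * B * M - A)ᵀ * (A * B * M - A) = 0 := by
      rw [Matrix.transpose_sub, Matrix.sub_mul, Matrix.mul_sub, Matrix.mul_sub]
      have t1 : (A * B * M)ᵀ * (A * B * M) = M * Bᵀ * M := by
        rw [Matrix.transpose_mul (A * B) M, Matrix.transpose_mul A B, hMsymm,
          Matrix.mul_assoc M (Bᵀ * Aᵀ) (A * B * M), Matrix.mul_assoc Bᵀ Aᵀ (A * B * M),
          e0, ← Matrix.mul_assoc]
      have t2 : (A * B * M)ᵀ * A = M * Bᵀ * M := by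
        rw [Matrix.transpose_mul (A * B) M, Matrix.transpose_mul A B, hMsymm,
          Matrix.mul_assoc M (Bᵀ * Aᵀ) A, Matrix.mul_assoc Bᵀ Aᵀ A, ← hM,
          ← Matrix.mul_assoc]
      rw [t1, t2, e0, ← hM]
      abel
    have := Matrix.conjTranspose_mul_self_eq_zero (A := A * B * M - A)
    rw [Matrix.conjTranspose_eq_transpose_of_trivial] at this
    exact sub_eq_zero.mp (this.mp hX)
  -- Step 2: P is symmetric idempotent
  set P : Matrix (Fin m) (Fin m) ℝ := A * B * Aᵀ with hP
  have hPP : P * P = P := by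
    have : P * P = (A * B * M) * (B * Aᵀ) := by
      rw [hP, hM]; simp only [Matrix.mul_assoc]
    rw [this, hABM, hP, Matrix.mul_assoc]
  have hPT : Pᵀ = A * Bᵀ * Aᵀ := by
    rw [hP, Matrix.transpose_mul, Matrix.transpose_mul, Matrix.transpose_transpose,
      Matrix.mul_assoc]
  have h1 : P * Pᵀ = Pᵀ := by
    have : P * Pᵀ = (A * B * M) * (Bᵀ * Aᵀ) := by
      rw [hPT, hP, hM]; simp only [Matrix.mul_assoc]
    rw [this, hABM, hPT, Matrix.mul_assoc]
  have hPsymm : P = Pᵀ := by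
    calc P = (Pᵀ)ᵀ := (Matrix.transpose_transpose P).symm
      _ = (P * Pᵀ)ᵀ := by rw [h1]
      _ = Pᵀᵀ * Pᵀ := by rw [Matrix.transpose_mul]
      _ = P * Pᵀ := by rw [Matrix.transpose_transpose]
      _ = Pᵀ := h1
  -- diagonal bound
  have hdiag : ∀ i, 0 ≤ P i i ∧ P i i ≤ 1 := by
    intro i
    have hsum : P i i = ∑ j, (P i j) ^ 2 := by
      conv_lhs => rw [← hPP]
      rw [Matrix.mul_apply]
      refine Finset.sum_congr rfl fun j _ => ?_
      have hji : P j i = P i j := by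
        conv_lhs => rw [hPsymm]
        rw [Matrix.transpose_apply]
      rw [hji, sq]
    have hnn : 0 ≤ P i i := by
      rw [hsum]; exact Finset.sum_nonneg fun j _ => sq_nonneg _
    have hle : (P i i) ^ 2 ≤ ∑ j, (P i j) ^ 2 :=
      Finset.single_le_sum (f := fun j => P i j ^ 2)
        (fun j _ => sq_nonneg _) (Finset.mem_univ i)
    exact ⟨hnn, by nlinarith [hsum, hle, hnn]⟩
  -- quadratic form
  have hform : ∀ i, A i ⬝ᵥ B.mulVec (A i) = P i i := by
    intro i
    rw [hP, Matrix.mul_apply]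
    simp only [Matrix.mul_apply, Matrix.mulVec, dotProduct, Matrix.transpose_apply,
      Finset.mul_sum, Finset.sum_mul]
    rw [Finset.sum_comm]
    refine Finset.sum_congr rfl fun j _ => Finset.sum_congr rfl fun l _ => by ring
  have hsform : ∀ (r : ℝ) (i : Fin m), (r • A i) ⬝ᵥ B.mulVec (r • A i) = r ^ 2 * P i i := by
    intro r i
    rw [Matrix.mulVec_smul, smul_dotProduct, dotProduct_smul, smul_eq_mul, smul_eq_mul,
      hform i]
    ring
  -- put it together
  set S : ℝ := ∑ i, res A b y i ^ 2 with hS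
  have hS0 : 0 ≤ S := Finset.sum_nonneg fun i _ => sq_nonneg _
  set g : Fin (m - β + 1) → Fin m := fun k => ord ⟨β - 1 + k.val, by have := k.isLt; omega⟩
    with hg
  have hginj : Function.Injective g := by
    intro k k' h
    have h2 := ord.injective h
    have hv : β - 1 + k.val = β - 1 + k'.val := congrArg Fin.val h2
    exact Fin.ext (by omega)
  have hC0 : (0:ℝ) < (m.choose β : ℝ) := by exact_mod_cast Nat.choose_pos hβm
  have key : ∀ k : Fin (m - β + 1),
      ((β - 1 + k.val).choose (β - 1) : ℝ) *
        ((res A b y (g k) • A (g k)) ⬝ᵥ B.mulVec (res A b y (g k) • A (g k)))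
      ≤ ((m - 1).choose (β - 1) : ℝ) * res A b y (g k) ^ 2 := by
    intro k
    rw [hsform]
    have hP01 := hdiag (g k)
    have hc : ((β - 1 + k.val).choose (β - 1) : ℝ) ≤ ((m - 1).choose (β - 1) : ℝ) := by
      exact_mod_cast Nat.choose_le_choose (β - 1) (by have := k.isLt; omega)
    have h1' : res A b y (g k) ^ 2 * P (g k) (g k) ≤ res A b y (g k) ^ 2 * 1 :=
      mul_le_mul_of_nonneg_left hP01.2 (sq_nonneg _)
    have h2' : 0 ≤ res A b y (g k) ^ 2 * P (g k) (g k) :=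
      mul_nonneg (sq_nonneg _) hP01.1
    calc ((β - 1 + k.val).choose (β - 1) : ℝ) * (res A b y (g k) ^ 2 * P (g k) (g k))
        ≤ ((m - 1).choose (β - 1) : ℝ) * (res A b y (g k) ^ 2 * 1) :=
          mul_le_mul hc h1' h2' (Nat.cast_nonneg _)
      _ = _ := by ring
  have himg : ∑ k : Fin (m - β + 1), res A b y (g k) ^ 2 ≤ S := by
    rw [hS]
    calc ∑ k : Fin (m - β + 1), res A b y (g k) ^ 2
        = ∑ i ∈ Finset.univ.image g, res A b y i ^ 2 :=
          (Finset.sum_image (f := fun i => res A b y i ^ 2) (g := g)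
            (s := Finset.univ) (fun a _ c _ h => hginj h)).symm
      _ ≤ ∑ i, res A b y i ^ 2 :=
          Finset.sum_le_sum_of_subset_of_nonneg (Finset.subset_univ _)
            (fun i _ _ => sq_nonneg _)
  have hidN : m * (m - 1).choose (β - 1) = m.choose β * β := by
    have h1 := Nat.add_one_mul_choose_eq (m - 1) (β - 1)
    rw [show m - 1 + 1 = m by omega, show β - 1 + 1 = β by omega] at h1
    exact h1
  have hid : ((m - 1).choose (β - 1) : ℝ) / (m.choose β : ℝ) = (β : ℝ) / (m : ℝ) := by
    have hm0 : (0:ℝ) < (m:ℝ) := by exact_mod_cast Nat.lt_of_lt_of_le Nat.zero_lt_one hm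
    rw [div_eq_div_iff hC0.ne' hm0.ne']
    have : ((m : ℝ)) * ((m - 1).choose (β - 1) : ℝ) = (m.choose β : ℝ) * (β : ℝ) := by
      exact_mod_cast hidN
    linarith
  have main : ∑ k : Fin (m - β + 1), ((β - 1 + k.val).choose (β - 1) : ℝ) *
        ((res A b y (g k) • A (g k)) ⬝ᵥ B.mulVec (res A b y (g k) • A (g k)))
      ≤ ((m - 1).choose (β - 1) : ℝ) * S := by
    calc ∑ k : Fin (m - β + 1), ((β - 1 + k.val).choose (β - 1) : ℝ) *
          ((res A b y (g k) • A (g k)) ⬝ᵥ B.mulVec (res A b y (g k) • A (g k)))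
        ≤ ∑ k : Fin (m - β + 1), ((m - 1).choose (β - 1) : ℝ) * res A b y (g k) ^ 2 :=
          Finset.sum_le_sum fun k _ => key k
      _ = ((m - 1).choose (β - 1) : ℝ) * ∑ k : Fin (m - β + 1), res A b y (g k) ^ 2 := by
          rw [Finset.mul_sum]
      _ ≤ ((m - 1).choose (β - 1) : ℝ) * S :=
          mul_le_mul_of_nonneg_left himg (Nat.cast_nonneg _)
  calc (1 / (m.choose β : ℝ)) *
      ∑ k : Fin (m - β + 1), ((β - 1 + k.val).choose (β - 1) : ℝ) *
        ((res A b y (g k) • A (g k)) ⬝ᵥ B.mulVec (res A b y (g k) • A (g k)))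
      ≤ (1 / (m.choose β : ℝ)) * (((m - 1).choose (β - 1) : ℝ) * S) :=
        mul_le_mul_of_nonneg_left main (by positivity)
    _ = (((m - 1).choose (β - 1) : ℝ) / (m.choose β : ℝ)) * S := by ring
    _ = ((β : ℝ) / (m : ℝ)) * S := by rw [hid]
end
end

section
/- Let λ, ζ, β, m > 0, σ₁ = 1 + √(λβζ)/(2m), σ₂ = 1 − √(λβζ)/(2m), and B₀ > 0, A₀ = 0. Suppose nonnegative sequences {A_k}, {B_k} satisfy A_{k+1} ≥ A_k + (ζ√β/(2m)) B_k and B_{k+1} ≥ B_k + (λ√β/(2m)) A_k for all k ≥ 0. Then for all k ≥ 0: A_{k+1} ≥ (1/2)√(ζ/λ)(σ₁^{k+1} − σ₂^{k+1}) B₀ and B_{k+1} ≥ (1/2)(σ₁^{k+1} + σ₂^{k+1}) B₀. -/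
/-- Nonnegative sequences `{Aₖ}, {Bₖ}` with `A₀ = 0`, `B₀ > 0`
satisfying `Aₖ₊₁ ≥ Aₖ + (ζ√β/(2m))Bₖ` and `Bₖ₊₁ ≥ Bₖ + (λ√β/(2m))Aₖ` obey, for all
`k ≥ 0`, `Aₖ₊₁ ≥ (1/2)√(ζ/λ)(σ₁^{k+1} − σ₂^{k+1})B₀` and
`Bₖ₊₁ ≥ (1/2)(σ₁^{k+1} + σ₂^{k+1})B₀`, where `σ₁ = 1 + √(λβζ)/(2m)`,
`σ₂ = 1 - √(λβζ)/(2m)`. -/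
theorem stmt11 (lam ζ β m : ℝ) (hlam : 0 < lam) (hζ : 0 < ζ) (hβ : 0 < β) (hm : 0 < m)
    (A B : ℕ → ℝ) (hA0 : A 0 = 0) (hB0 : 0 < B 0)
    (hAnn : ∀ k, 0 ≤ A k) (hBnn : ∀ k, 0 ≤ B k)
    (hArec : ∀ k, A k + (ζ * Real.sqrt β / (2 * m)) * B k ≤ A (k + 1))
    (hBrec : ∀ k, B k + (lam * Real.sqrt β / (2 * m)) * A k ≤ B (k + 1)) :
    ∀ k : ℕ,
      (1 / 2) * Real.sqrt (ζ / lam) *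
          ((1 + Real.sqrt (lam * β * ζ) / (2 * m)) ^ (k + 1) -
            (1 - Real.sqrt (lam * β * ζ) / (2 * m)) ^ (k + 1)) * B 0 ≤ A (k + 1) ∧
      (1 / 2) *
          ((1 + Real.sqrt (lam * β * ζ) / (2 * m)) ^ (k + 1) +
            (1 - Real.sqrt (lam * β * ζ) / (2 * m)) ^ (k + 1)) * B 0 ≤ B (k + 1) := by
  set c := Real.sqrt (ζ / lam) with hc
  set s := Real.sqrt (lam * β * ζ) / (2 * m) with hs
  set a := ζ * Real.sqrt β / (2 * m) with ha
  set b := lam * Real.sqrt β / (2 * m) with hb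
  have h1 : Real.sqrt (ζ / lam) * Real.sqrt (lam * β * ζ) = ζ * Real.sqrt β := by
    rw [← Real.sqrt_mul (by positivity),
      show ζ / lam * (lam * β * ζ) = ζ ^ 2 * β by field_simp,
      Real.sqrt_mul (by positivity), Real.sqrt_sq hζ.le]
  have h2 : Real.sqrt (lam * β * ζ) = lam * (Real.sqrt β * Real.sqrt (ζ / lam)) := by
    rw [show lam * β * ζ = lam ^ 2 * (β * (ζ / lam)) by field_simp,
      Real.sqrt_mul (by positivity), Real.sqrt_sq hlam.le, Real.sqrt_mul hβ.le]
  have hcs : c * s = a := by rw [hc, hs, ha, ← h1]; ring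
  have hbc : b * c = s := by rw [hb, hc, hs, h2]; ring
  have hb0 : 0 ≤ b := by positivity
  have key : ∀ k : ℕ,
      (1 / 2) * c * ((1 + s) ^ k - (1 - s) ^ k) * B 0 ≤ A k ∧
      (1 / 2) * ((1 + s) ^ k + (1 - s) ^ k) * B 0 ≤ B k := by
    intro k
    induction k with
    | zero => norm_num [hA0]
    | succ n ih =>
      obtain ⟨ihA, ihB⟩ := ih
      constructor
      · calc (1 / 2) * c * ((1 + s) ^ (n + 1) - (1 - s) ^ (n + 1)) * B 0
            = (1 / 2) * c * ((1 + s) ^ n - (1 - s) ^ n) * B 0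
              + (c * s) * ((1 / 2) * ((1 + s) ^ n + (1 - s) ^ n) * B 0) := by ring
          _ ≤ A n + a * B n := by
              rw [hcs]
              have := mul_le_mul_of_nonneg_left ihB (by positivity : (0:ℝ) ≤ a)
              linarith
          _ ≤ A (n + 1) := hArec n
      · calc (1 / 2) * ((1 + s) ^ (n + 1) + (1 - s) ^ (n + 1)) * B 0
            = (1 / 2) * ((1 + s) ^ n + (1 - s) ^ n) * B 0
              + b * ((1 / 2) * c * ((1 + s) ^ n - (1 - s) ^ n) * B 0) := by
              rw [show b * ((1 / 2) * c * ((1 + s) ^ n - (1 - s) ^ n) * B 0)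
                = (b * c) * ((1 / 2) * ((1 + s) ^ n - (1 - s) ^ n) * B 0) by ring, hbc]
              ring
          _ ≤ B n + b * A n := by
              have := mul_le_mul_of_nonneg_left ihA hb0
              linarith
          _ ≤ B (n + 1) := hBrec n
  intro k
  exact key (k + 1)
end
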